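/- Let m and n be positive integers with m odd. Then the element [m+n−1]·(∏_{j=0}^{n−2}[m+1+2j])/[n]! of ℚ(q) is a Laurent polynomial with integer coefficients, i.e. it lies in the image of ℤ[q,q⁻¹] in ℚ(q) (the product is over 0 ≤ j ≤ n−2 and is empty when n = 1). -/

import Mathlib

open scoped BigOperators

/-- The generator `q` of the field of rational functions `ℚ(q)`. -/
noncomputable def q : RatFunc ℚ := RatFunc.X

/-- The balanced quantum integer `[a] = (q^a - q^(-a))/(q - q⁻¹)`. -/
noncomputable def qint (a : ℤ) : RatFunc ℚ := (q ^ a - q ^ (-a)) / (q - q⁻¹)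

/-- The quantum factorial `[k]! = [1][2]⋯[k]`. -/
noncomputable def qfact (k : ℕ) : RatFunc ℚ := ∏ i ∈ Finset.range k, qint ((i : ℤ) + 1)

/-- The balanced quantum binomial `qbinom a b = [a][a-1]⋯[a-b+1]/[b]!` for `b ≥ 0`,
and `0` for `b < 0`. -/
noncomputable def qbinom (a b : ℤ) : RatFunc ℚ :=
  if b < 0 then 0
  else (∏ i ∈ Finset.range b.toNat, qint (a - (i : ℤ))) / qfact b.toNat

/-- `f` lies in the image of `ℤ[q, q⁻¹]` in `ℚ(q)`. -/
def IsIntLaurent (f : RatFunc ℚ) : Prop :=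
  ∃ (p : Polynomial ℤ) (k : ℕ), f = Polynomial.aeval q p * q ^ (-(k : ℤ))

lemma q_ne : q ≠ 0 := RatFunc.X_ne_zero

lemma q_pow_ne_one {n : ℕ} (h : 0 < n) : q ^ n ≠ 1 := by
  intro hq
  have : (algebraMap (Polynomial ℚ) (RatFunc ℚ)) (Polynomial.X ^ n) =
      (algebraMap (Polynomial ℚ) (RatFunc ℚ)) 1 := by
    simpa [map_pow, RatFunc.algebraMap_X, q] using hq
  have h2 := RatFunc.algebraMap_injective ℚ this
  have := congrArg Polynomial.natDegree h2
  simp [Polynomial.natDegree_X_pow] at this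
  omega

lemma d_ne : q - q⁻¹ ≠ 0 := by
  intro h
  have h1 : q * q = 1 := by
    nth_rewrite 1 [sub_eq_zero.mp h]
    exact inv_mul_cancel₀ q_ne
  exact q_pow_ne_one (n := 2) (by norm_num) (by rw [pow_two]; exact h1)

lemma qint_zero : qint 0 = 0 := by simp [qint]

lemma qint_one : qint 1 = 1 := by
  simp only [qint, zpow_one, zpow_neg, zpow_one]
  exact div_self d_ne

lemma qint_add (x y : ℤ) : qint (x + y) = q ^ y * qint x + q ^ (-x) * qint y := by
  simp only [qint]
  rw [← mul_div_assoc, ← mul_div_assoc, ← add_div]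
  congr 1
  rw [neg_add, zpow_add₀ q_ne, zpow_add₀ q_ne]
  ring

lemma qint_neg (a : ℤ) : qint (-a) = - qint a := by
  simp only [qint, neg_neg]
  rw [← neg_div]
  ring_nf

lemma qint_ne_zero {n : ℕ} (h : 0 < n) : qint (n : ℤ) ≠ 0 := by
  intro h0
  have h1 : q ^ (n : ℤ) - q ^ (-(n : ℤ)) = 0 := by
    have := h0
    rw [qint, div_eq_zero_iff] at this
    exact this.resolve_right d_ne
  have he : q ^ ((n : ℤ)) = q ^ (-(n : ℤ)) := sub_eq_zero.mp h1
  have h2 : q ^ (2 * n) = 1 := by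
    have hc : ((2 * n : ℕ) : ℤ) = (n : ℤ) + n := by push_cast; ring
    rw [← zpow_natCast q (2 * n), hc, zpow_add₀ q_ne]
    nth_rewrite 1 [he]
    rw [← zpow_add₀ q_ne]; simp
  exact q_pow_ne_one (by omega) h2

lemma qfact_succ (n : ℕ) : qfact (n + 1) = qfact n * qint ((n : ℤ) + 1) :=
  Finset.prod_range_succ _ n

lemma qfact_ne_zero (n : ℕ) : qfact n ≠ 0 := by
  induction n with
  | zero => simp [qfact]
  | succ k ih =>
    rw [qfact_succ]
    have : ((k : ℤ) + 1) = ((k + 1 : ℕ) : ℤ) := by push_cast; ring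
    rw [this]
    exact mul_ne_zero ih (qint_ne_zero (by omega))

lemma q_pow_shift (a b c : ℕ) (h : a + b = c) :
    q ^ a * q ^ (-(c : ℤ)) = q ^ (-(b : ℤ)) := by
  rw [← zpow_natCast q a, ← zpow_add₀ q_ne]
  congr 1
  omega

lemma IsIntLaurent.one' : IsIntLaurent 1 := ⟨1, 0, by simp⟩

lemma IsIntLaurent.zero' : IsIntLaurent 0 := ⟨0, 0, by simp⟩

lemma IsIntLaurent.neg {f : RatFunc ℚ} (hf : IsIntLaurent f) : IsIntLaurent (-f) := by
  obtain ⟨p, k, rfl⟩ := hf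
  exact ⟨-p, k, by simp⟩

lemma IsIntLaurent.mul {f g : RatFunc ℚ} (hf : IsIntLaurent f) (hg : IsIntLaurent g) :
    IsIntLaurent (f * g) := by
  obtain ⟨p1, k1, rfl⟩ := hf
  obtain ⟨p2, k2, rfl⟩ := hg
  refine ⟨p1 * p2, k1 + k2, ?_⟩
  rw [map_mul]
  have : q ^ (-(k1 : ℤ)) * q ^ (-(k2 : ℤ)) = q ^ (-((k1 + k2 : ℕ) : ℤ)) := by
    rw [← zpow_add₀ q_ne]; congr 1; omega
  rw [← this]; ring

lemma IsIntLaurent.add {f g : RatFunc ℚ} (hf : IsIntLaurent f) (hg : IsIntLaurent g) :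
    IsIntLaurent (f + g) := by
  obtain ⟨p1, k1, rfl⟩ := hf
  obtain ⟨p2, k2, rfl⟩ := hg
  refine ⟨p1 * Polynomial.X ^ k2 + p2 * Polynomial.X ^ k1, k1 + k2, ?_⟩
  simp only [map_add, map_mul, map_pow, Polynomial.aeval_X]
  rw [add_mul, mul_assoc, mul_assoc, q_pow_shift k2 k1 (k1 + k2) (by omega),
    q_pow_shift k1 k2 (k1 + k2) (by omega)]

lemma IsIntLaurent.zpow (z : ℤ) : IsIntLaurent (q ^ z) := by
  obtain ⟨n, rfl | rfl⟩ := z.eq_nat_or_neg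
  · exact ⟨Polynomial.X ^ n, 0, by simp [zpow_natCast]⟩
  · exact ⟨1, n, by simp⟩

lemma isIntLaurent_qint (a : ℤ) : IsIntLaurent (qint a) := by
  suffices h : ∀ n : ℕ, IsIntLaurent (qint n) by
    obtain ⟨n, rfl | rfl⟩ := a.eq_nat_or_neg
    · exact h n
    · rw [qint_neg]; exact (h n).neg
  intro n
  induction n with
  | zero => simpa [qint_zero] using IsIntLaurent.zero'
  | succ k ih =>
    have : qint ((k + 1 : ℕ) : ℤ) = q ^ (1 : ℤ) * qint k + q ^ (-(k : ℤ)) * qint 1 := by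
      have e : ((k + 1 : ℕ) : ℤ) = (k : ℤ) + 1 := by push_cast; ring
      rw [e, qint_add]
    rw [this, qint_one, mul_one]
    exact ((IsIntLaurent.zpow 1).mul ih).add (IsIntLaurent.zpow _)

noncomputable def qbinomN (a : ℤ) (b : ℕ) : RatFunc ℚ :=
  (∏ i ∈ Finset.range b, qint (a - i)) / qfact b

lemma qbinomN_zero (a : ℤ) : qbinomN a 0 = 1 := by simp [qbinomN, qfact]

lemma qbinomN_pascal (a : ℤ) (b : ℕ) :
    qbinomN a (b + 1) = q ^ ((b : ℤ) + 1) * qbinomN (a - 1) (b + 1)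
      + q ^ ((b : ℤ) + 1 - a) * qbinomN (a - 1) b := by
  have h1 : (∏ i ∈ Finset.range (b + 1), qint (a - i)) =
      qint a * ∏ i ∈ Finset.range b, qint (a - 1 - i) := by
    rw [Finset.prod_range_succ' (fun i : ℕ => qint (a - (i : ℤ))) b]
    have e0 : qint (a - ((0 : ℕ) : ℤ)) = qint a := by norm_num
    have e : ∀ x ∈ Finset.range b, qint (a - ((x + 1 : ℕ) : ℤ)) = qint (a - 1 - (x : ℤ)) := by
      intro x _; congr 1; push_cast; ring
    rw [Finset.prod_congr rfl e, e0, mul_comm]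
  have h2 : (∏ i ∈ Finset.range (b + 1), qint (a - 1 - i)) =
      (∏ i ∈ Finset.range b, qint (a - 1 - i)) * qint (a - 1 - b) :=
    Finset.prod_range_succ _ b
  have h3 : qint a = q ^ ((b : ℤ) + 1) * qint (a - 1 - b) + q ^ ((b : ℤ) + 1 - a) * qint ((b : ℤ) + 1) := by
    have h := qint_add (a - 1 - b) ((b : ℤ) + 1)
    have e1 : a - 1 - (b : ℤ) + ((b : ℤ) + 1) = a := by ring
    have e2 : -(a - 1 - (b : ℤ)) = (b : ℤ) + 1 - a := by ring
    rw [e1, e2] at h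
    exact h
  have hb1 : qint ((b : ℤ) + 1) ≠ 0 := by
    have e : ((b : ℤ) + 1) = ((b + 1 : ℕ) : ℤ) := by push_cast; ring
    rw [e]; exact qint_ne_zero (by omega)
  have hfb := qfact_ne_zero b
  simp only [qbinomN]
  rw [h1, h2, h3, qfact_succ]
  field_simp

lemma isIntLaurent_qbinomN (a b : ℕ) : IsIntLaurent (qbinomN (a : ℤ) b) := by
  induction a generalizing b with
  | zero =>
    cases b with
    | zero => rw [qbinomN_zero]; exact IsIntLaurent.one'
    | succ B =>
      have h0 : (∏ i ∈ Finset.range (B + 1), qint (((0 : ℕ) : ℤ) - i)) = 0 :=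
        Finset.prod_eq_zero (Finset.mem_range.mpr (Nat.succ_pos B)) (by norm_num [qint_zero])
      simp only [qbinomN]
      rw [h0, zero_div]
      exact IsIntLaurent.zero'
  | succ a ih =>
    cases b with
    | zero => rw [qbinomN_zero]; exact IsIntLaurent.one'
    | succ B =>
      have e : (((a + 1 : ℕ)) : ℤ) = (a : ℤ) + 1 := by push_cast; ring
      rw [e, qbinomN_pascal, add_sub_cancel_right]
      exact ((IsIntLaurent.zpow _).mul (ih (B + 1))).add ((IsIntLaurent.zpow _).mul (ih B))

lemma qint_double (k : ℤ) : qint (2 * k) = qint k * (q ^ k + q ^ (-k)) := by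
  rw [two_mul, qint_add]; ring

lemma prod_qint_reverse (d : ℤ) (K : ℕ) :
    (∏ j ∈ Finset.range K, qint (d + j)) = ∏ i ∈ Finset.range K, qint (d + K - 1 - i) := by
  rw [← Finset.prod_range_reflect (fun j : ℕ => qint (d + j)) K]
  refine Finset.prod_congr rfl fun j hj => ?_
  have hj' := Finset.mem_range.mp hj
  congr 1
  omega


/-- For `m` odd and positive and `n ≥ 1`, the element
`[m+n-1]·([m+1][m+3]⋯[m+2n-3])/[n]!` is a Laurent polynomial with integer coefficients. -/
theorem qint_prod_div_qfact_isIntLaurent (m n : ℕ) (hm : 1 ≤ m) (hmodd : Odd m) (hn : 1 ≤ n) :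
    IsIntLaurent (qint ((m : ℤ) + n - 1) *
      (∏ j ∈ Finset.range (n - 1), qint ((m : ℤ) + 1 + 2 * (j : ℤ))) / qfact n) := by
  obtain ⟨t, ht⟩ := hmodd
  obtain ⟨N, rfl⟩ : ∃ N, n = N + 1 := ⟨n - 1, by omega⟩
  set c : ℕ := t + 1 with hcdef
  simp only [Nat.add_sub_cancel]
  have hprod : (∏ j ∈ Finset.range N, qint ((m : ℤ) + 1 + 2 * (j : ℤ))) =
      (∏ j ∈ Finset.range N, qint ((c : ℤ) + j)) *
      (∏ j ∈ Finset.range N, (q ^ ((c : ℤ) + j) + q ^ (-((c : ℤ) + j)))) := by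
    rw [← Finset.prod_mul_distrib]
    refine Finset.prod_congr rfl fun j _ => ?_
    have e : (m : ℤ) + 1 + 2 * (j : ℤ) = 2 * ((c : ℤ) + j) := by omega
    rw [e, qint_double]
  have hN1 : qint ((N : ℤ) + 1) ≠ 0 := by
    have e : ((N : ℤ) + 1) = ((N + 1 : ℕ) : ℤ) := by push_cast; ring
    rw [e]; exact qint_ne_zero (by omega)
  have hT1 : qint ((N : ℤ) + 1) * (∏ j ∈ Finset.range N, qint ((c : ℤ) + j)) / qfact (N + 1)
      = qbinomN ((c : ℤ) + N - 1) N := by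
    rw [qfact_succ, prod_qint_reverse]
    simp only [qbinomN]
    rw [mul_comm (qfact N) (qint ((N : ℤ) + 1))]
    exact mul_div_mul_left _ _ hN1
  have hpre : qint ((c : ℤ) - 1) * (∏ j ∈ Finset.range N, qint ((c : ℤ) + j))
      = ∏ j ∈ Finset.range (N + 1), qint ((c : ℤ) - 1 + j) := by
    rw [Finset.prod_range_succ' (fun j : ℕ => qint ((c : ℤ) - 1 + j)) N]
    have e : ∀ x ∈ Finset.range N,
        qint ((c : ℤ) - 1 + ((x + 1 : ℕ) : ℤ)) = qint ((c : ℤ) + x) := by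
      intro x _; congr 1; push_cast; ring
    have e0 : qint ((c : ℤ) - 1 + ((0 : ℕ) : ℤ)) = qint ((c : ℤ) - 1) := by norm_num
    rw [Finset.prod_congr rfl e, e0, mul_comm]
  have hT2 : qint (2 * ((c : ℤ) - 1)) * (∏ j ∈ Finset.range N, qint ((c : ℤ) + j)) / qfact (N + 1)
      = (q ^ ((c : ℤ) - 1) + q ^ (-((c : ℤ) - 1))) * qbinomN ((c : ℤ) + N - 1) (N + 1) := by
    rw [qint_double]
    have hrev : (∏ j ∈ Finset.range (N + 1), qint ((c : ℤ) - 1 + j))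
        = ∏ i ∈ Finset.range (N + 1), qint ((c : ℤ) + N - 1 - i) := by
      rw [prod_qint_reverse]
      refine Finset.prod_congr rfl fun i _ => ?_
      congr 1
      push_cast; ring
    calc qint ((c : ℤ) - 1) * (q ^ ((c : ℤ) - 1) + q ^ (-((c : ℤ) - 1))) *
          (∏ j ∈ Finset.range N, qint ((c : ℤ) + j)) / qfact (N + 1)
        = (q ^ ((c : ℤ) - 1) + q ^ (-((c : ℤ) - 1))) *
          ((qint ((c : ℤ) - 1) * ∏ j ∈ Finset.range N, qint ((c : ℤ) + j)) / qfact (N + 1)) := by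
          ring
      _ = _ := by rw [hpre, hrev]; simp only [qbinomN]
  have hsplit : qint ((m : ℤ) + ((N + 1 : ℕ) : ℤ) - 1)
      = q ^ (2 * ((c : ℤ) - 1)) * qint ((N : ℤ) + 1)
        + q ^ (-((N : ℤ) + 1)) * qint (2 * ((c : ℤ) - 1)) := by
    have h := qint_add ((N : ℤ) + 1) (2 * ((c : ℤ) - 1))
    have e1 : (N : ℤ) + 1 + 2 * ((c : ℤ) - 1) = (m : ℤ) + ((N + 1 : ℕ) : ℤ) - 1 := by
      push_cast; omega
    rw [e1] at h
    exact h
  rw [hprod, hsplit]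
  have final : (q ^ (2 * ((c : ℤ) - 1)) * qint ((N : ℤ) + 1)
        + q ^ (-((N : ℤ) + 1)) * qint (2 * ((c : ℤ) - 1))) *
      ((∏ j ∈ Finset.range N, qint ((c : ℤ) + j)) *
       (∏ j ∈ Finset.range N, (q ^ ((c : ℤ) + j) + q ^ (-((c : ℤ) + j))))) / qfact (N + 1)
      = q ^ (2 * ((c : ℤ) - 1)) *
          (qint ((N : ℤ) + 1) * (∏ j ∈ Finset.range N, qint ((c : ℤ) + j)) / qfact (N + 1)) *
          (∏ j ∈ Finset.range N, (q ^ ((c : ℤ) + j) + q ^ (-((c : ℤ) + j))))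
        + q ^ (-((N : ℤ) + 1)) *
          (qint (2 * ((c : ℤ) - 1)) * (∏ j ∈ Finset.range N, qint ((c : ℤ) + j)) / qfact (N + 1)) *
          (∏ j ∈ Finset.range N, (q ^ ((c : ℤ) + j) + q ^ (-((c : ℤ) + j)))) := by
    ring
  rw [final, hT1, hT2]
  have hA : ((c : ℤ) + N - 1) = ((c + N - 1 : ℕ) : ℤ) := by omega
  have hB1 : IsIntLaurent (qbinomN ((c : ℤ) + N - 1) N) := by
    rw [hA]; exact isIntLaurent_qbinomN _ _
  have hB2 : IsIntLaurent (qbinomN ((c : ℤ) + N - 1) (N + 1)) := by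
    rw [hA]; exact isIntLaurent_qbinomN _ _
  have hPint : IsIntLaurent
      (∏ j ∈ Finset.range N, (q ^ ((c : ℤ) + j) + q ^ (-((c : ℤ) + j)))) := by
    refine Finset.prod_induction _ IsIntLaurent (fun _ _ => IsIntLaurent.mul)
      IsIntLaurent.one' fun j _ => (IsIntLaurent.zpow _).add (IsIntLaurent.zpow _)
  exact IsIntLaurent.add
    (((IsIntLaurent.zpow _).mul hB1).mul hPint)
    (((IsIntLaurent.zpow _).mul
      (((IsIntLaurent.zpow _).add (IsIntLaurent.zpow _)).mul hB2)).mul hPint)
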